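/- arXiv:1409.4098 — 5 statements merged into one kernel-verified Lean document; each statement's English description precedes it below -/
import Mathlib

section
/- Let a, b, e, f be rational numbers and T = exp(N(a,b,e,f)). Then all entries of T are integers if and only if a ∈ ℤ, b ∈ ℤ, e + ab/2 ∈ ℤ, e − ab/2 ∈ ℤ, and f − a²b/6 ∈ ℤ. -/
open Matrix

/-- The symplectic form matrix `J`. -/
def Jmat (R : Type*) [Zero R] [One R] [Neg R] : Matrix (Fin 4) (Fin 4) R :=
  !![0, 0, 0, 1;
     0, 0, 1, 0;
     0, -1, 0, 0;
     -1, 0, 0, 0]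

/-- The normalized nilpotent matrix `N(a,b,e,f)`. -/
def Nmat {R : Type*} [Zero R] [Neg R] (a b e f : R) : Matrix (Fin 4) (Fin 4) R :=
  !![0, 0, 0, 0;
     a, 0, 0, 0;
     e, b, 0, 0;
     f, e, -a, 0]

lemma Nsq (a b e f : ℚ) : Nmat a b e f ^ 2 =
    !![0,0,0,0; 0,0,0,0; a*b,0,0,0; 0,-(a*b),0,0] := by
  rw [pow_two, Nmat]
  ext i j
  fin_cases i <;> fin_cases j <;>
    simp [Matrix.mul_apply, Fin.sum_univ_four, Matrix.vecHead, Matrix.vecTail] <;> ring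

lemma Ncube (a b e f : ℚ) : Nmat a b e f ^ 3 =
    !![0,0,0,0; 0,0,0,0; 0,0,0,0; -(a*(a*b)),0,0,0] := by
  rw [pow_succ, Nsq, Nmat]
  ext i j
  fin_cases i <;> fin_cases j <;>
    simp [Matrix.mul_apply, Fin.sum_univ_four, Matrix.vecHead, Matrix.vecTail] <;> ring

lemma Nfour (a b e f : ℚ) : Nmat a b e f ^ 4 = 0 := by
  rw [pow_succ, Ncube, Nmat]
  ext i j
  fin_cases i <;> fin_cases j <;>
    simp [Matrix.mul_apply, Fin.sum_univ_four, Matrix.vecHead, Matrix.vecTail] <;> ring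

lemma exp_N (a b e f : ℚ) : NormedSpace.exp (Nmat a b e f) =
    !![1,0,0,0;
       a,1,0,0;
       e + a*b/2, b, 1, 0;
       f - a^2*b/6, e - a*b/2, -a, 1] := by
  rw [NormedSpace.exp_eq_tsum (𝕂 := ℚ)]
  beta_reduce
  rw [tsum_eq_sum (s := Finset.range 4) (by
    intro n hn
    have h4 : 4 ≤ n := by simpa using hn
    obtain ⟨k, rfl⟩ := Nat.exists_eq_add_of_le h4
    rw [pow_add, Nfour, zero_mul, smul_zero])]
  simp only [Finset.sum_range_succ, Finset.sum_range_zero, zero_add]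
  rw [Nsq, Ncube, Nmat]
  ext i j
  fin_cases i <;> fin_cases j <;>
    simp [Nat.factorial, Matrix.vecHead, Matrix.vecTail] <;> ring

/-- for rational `a,b,e,f` and `T = exp(N(a,b,e,f))`, all entries of
`T` are integers iff `a, b, e + ab/2, e − ab/2, f − a²b/6 ∈ ℤ`. -/
theorem stmt2 (a b e f : ℚ) (T : Matrix (Fin 4) (Fin 4) ℚ)
    (hT : T = NormedSpace.exp (Nmat a b e f)) :
    (∀ i j : Fin 4, ∃ n : ℤ, T i j = (n : ℚ)) ↔
      ((∃ n : ℤ, a = (n : ℚ)) ∧ (∃ n : ℤ, b = (n : ℚ)) ∧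
       (∃ n : ℤ, e + a * b / 2 = (n : ℚ)) ∧ (∃ n : ℤ, e - a * b / 2 = (n : ℚ)) ∧
       (∃ n : ℤ, f - a ^ 2 * b / 6 = (n : ℚ))) := by
  subst hT
  rw [exp_N]
  constructor
  · intro h
    refine ⟨?_, ?_, ?_, ?_, ?_⟩
    · simpa using h 1 0
    · simpa using h 2 1
    · simpa using h 2 0
    · simpa using h 3 1
    · simpa using h 3 0
  · rintro ⟨⟨na, ha⟩, ⟨nb, hb⟩, ⟨n1, h1⟩, ⟨n2, h2⟩, ⟨n3, h3⟩⟩ i j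
    fin_cases i <;> fin_cases j <;>
      simp only [Matrix.cons_val', Matrix.cons_val_zero, Matrix.cons_val_one,
        Matrix.head_cons, Matrix.empty_val', Matrix.cons_val_fin_one,
        Matrix.vecHead, Matrix.vecTail, Matrix.cons_val_two, Matrix.cons_val_three,
        Matrix.cons_val_succ, Function.comp_apply, Fin.isValue] <;>
      first
        | exact ⟨1, Int.cast_one.symm⟩
        | exact ⟨0, Int.cast_zero.symm⟩
        | exact ⟨na, ha⟩
        | exact ⟨nb, hb⟩
        | exact ⟨n1, h1⟩
        | exact ⟨n2, h2⟩
        | exact ⟨n3, h3⟩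
        | exact ⟨-na, by simp [ha, Matrix.vecHead, Matrix.vecTail]⟩
end

section
/- Let a, b, e, f, p, q, r, s be real numbers, N = N(a,b,e,f), M = N(p,q,r,s), and A = exp(M). Then A·N·A⁻¹ = N(a, b, e − bp + aq, f − 2ep + bp² − apq + 2ar). In particular, the parameters a and b are unchanged under conjugation by exp(M). -/
open Matrix

lemma exp_nilp4 (M : Matrix (Fin 4) (Fin 4) ℝ) (h : M ^ 4 = 0) :
    NormedSpace.exp M = 1 + M + (2:ℝ)⁻¹ • M ^ 2 + (6:ℝ)⁻¹ • M ^ 3 := by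
  rw [NormedSpace.exp_eq_tsum ℝ]
  simp only []
  rw [tsum_eq_sum (s := Finset.range 4)]
  · simp [Finset.sum_range_succ]
    norm_num [Nat.factorial]
  · intro n hn
    have h4 : 4 ≤ n := Nat.le_of_not_lt (by simpa using hn)
    have : M ^ n = 0 := by
      rw [← Nat.sub_add_cancel h4, pow_add, h, mul_zero]
    simp [this]

theorem mul_fin_four {α : Type*} [AddCommMonoid α] [Mul α] (a00 a01 a02 a03 a10 a11 a12 a13 a20 a21 a22 a23 a30 a31 a32 a33 b00 b01 b02 b03 b10 b11 b12 b13 b20 b21 b22 b23 b30 b31 b32 b33 : α) :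
    !![a00, a01, a02, a03;
       a10, a11, a12, a13;
       a20, a21, a22, a23;
       a30, a31, a32, a33] * !![b00, b01, b02, b03;
       b10, b11, b12, b13;
       b20, b21, b22, b23;
       b30, b31, b32, b33] =
    !![a00*b00 + a01*b10 + a02*b20 + a03*b30, a00*b01 + a01*b11 + a02*b21 + a03*b31, a00*b02 + a01*b12 + a02*b22 + a03*b32, a00*b03 + a01*b13 + a02*b23 + a03*b33;
       a10*b00 + a11*b10 + a12*b20 + a13*b30, a10*b01 + a11*b11 + a12*b21 + a13*b31, a10*b02 + a11*b12 + a12*b22 + a13*b32, a10*b03 + a11*b13 + a12*b23 + a13*b33;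
       a20*b00 + a21*b10 + a22*b20 + a23*b30, a20*b01 + a21*b11 + a22*b21 + a23*b31, a20*b02 + a21*b12 + a22*b22 + a23*b32, a20*b03 + a21*b13 + a22*b23 + a23*b33;
       a30*b00 + a31*b10 + a32*b20 + a33*b30, a30*b01 + a31*b11 + a32*b21 + a33*b31, a30*b02 + a31*b12 + a32*b22 + a33*b32, a30*b03 + a31*b13 + a32*b23 + a33*b33] := by
  ext i j
  fin_cases i <;> fin_cases j <;>
    simp [Matrix.mul_apply, Fin.sum_univ_succ, ← add_assoc]

set_option maxHeartbeats 1000000 in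
/-- conjugating `N(a,b,e,f)` by `A = exp(N(p,q,r,s))` gives
`N(a, b, e − bp + aq, f − 2ep + bp² − apq + 2ar)`; in particular `a` and `b`
are unchanged. -/
theorem stmt4 (a b e f p q r s : ℝ) (A : Matrix (Fin 4) (Fin 4) ℝ)
    (hA : A = NormedSpace.exp (Nmat p q r s)) :
    A * Nmat a b e f * A⁻¹ =
      Nmat a b (e - b * p + a * q) (f - 2 * e * p + b * p ^ 2 - a * p * q + 2 * a * r) := by
  have hM2 : Nmat p q r s * Nmat p q r s =
      !![0,0,0,0; 0,0,0,0; p*q,0,0,0; 0,-(p*q),0,0] := by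
    rw [Nmat, mul_fin_four]
    ext i j
    fin_cases i <;> fin_cases j <;> simp [Matrix.vecHead, Matrix.vecTail] <;> ring
  have hM3 : (Nmat p q r s) ^ 3 = !![0,0,0,0; 0,0,0,0; 0,0,0,0; -(p*p*q),0,0,0] := by
    rw [pow_succ, pow_two, hM2, Nmat, mul_fin_four]
    ext i j
    fin_cases i <;> fin_cases j <;> simp [Matrix.vecHead, Matrix.vecTail] <;> ring
  have hM4 : (Nmat p q r s) ^ 4 = 0 := by
    rw [pow_succ, hM3, Nmat, mul_fin_four]
    ext i j
    fin_cases i <;> fin_cases j <;> simp [Matrix.vecHead, Matrix.vecTail]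
  have hAe : A = !![1,0,0,0; p,1,0,0; r + p*q/2, q, 1, 0;
      s - p*p*q/6, r - p*q/2, -p, 1] := by
    rw [hA, exp_nilp4 _ hM4, pow_two, hM2, hM3, Nmat]
    ext i j
    fin_cases i <;> fin_cases j <;>
      simp [Matrix.one_apply, Matrix.vecHead, Matrix.vecTail] <;> ring
  set B : Matrix (Fin 4) (Fin 4) ℝ :=
    !![1,0,0,0; -p,1,0,0; -r + p*q/2, -q, 1, 0;
       -s + p*p*q/6, -r - p*q/2, p, 1] with hBdef
  have hAB : A * B = 1 := by
    rw [hAe, hBdef, mul_fin_four]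
    ext i j
    fin_cases i <;> fin_cases j <;>
      simp [Matrix.one_apply, Matrix.vecHead, Matrix.vecTail] <;> ring
  have hAinv : A⁻¹ = B := Matrix.inv_eq_right_inv hAB
  rw [hAinv, hAe, hBdef, Nmat, mul_fin_four, mul_fin_four, Nmat]
  ext i j
  fin_cases i <;> fin_cases j <;> simp [Matrix.vecHead, Matrix.vecTail] <;> ring
end

section
/- Let a, b be integers, e, f rational numbers with exp(N(a,b,e,f)) having all integer entries, and let m = gcd(a,b). Let A be a lower unitriangular integer 4×4 matrix with AᵀJA = J, and write A·N(a,b,e,f)·A⁻¹ = N(a', b', e', f'). Then a' = a and b' = b, and: (i) if ab is even, then e and e' are integers and e' ≡ e (mod m); (ii) if ab is odd, then 2e and 2e' are odd integers and 2e' ≡ 2e (mod 2m). -/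
open Matrix

lemma Nmat_pow_four (a b e f : ℚ) : (Nmat a b e f)^4 = 0 := by
  ext i j
  fin_cases i <;> fin_cases j <;>
    simp [Nmat, pow_succ, Matrix.mul_apply, Fin.sum_univ_succ]

lemma exp20 (a b e f : ℚ) :
    NormedSpace.exp (Nmat a b e f) 2 0 = e + a * b / 2 := by
  have hz : ∀ n ∉ Finset.range 4, (n.factorial⁻¹ : ℚ) • (Nmat a b e f)^n = 0 := by
    intro n hn
    rw [Finset.mem_range, not_lt] at hn
    obtain ⟨k, rfl⟩ := Nat.exists_eq_add_of_le hn
    rw [pow_add, Nmat_pow_four, zero_mul, smul_zero]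
  rw [NormedSpace.exp_eq_tsum ℚ]; simp only []; rw [tsum_eq_sum hz]
  simp [Finset.sum_range_succ, Nmat, pow_succ, Matrix.mul_apply, Fin.sum_univ_succ,
    Matrix.sum_apply, Nat.factorial, Matrix.one_apply]
  ring

/-- with `a,b ∈ ℤ`, `e,f ∈ ℚ`, `exp(N(a,b,e,f))` integral,
`m = gcd(a,b)`, and `A` a lower unitriangular integral symplectic matrix with
`A·N(a,b,e,f)·A⁻¹ = N(a',b',e',f')`: then `a' = a`, `b' = b`, and `e ≡ e'` is an
integer mod `m` if `ab` is even, while `2e ≡ 2e'` are odd integers mod `2m` if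
`ab` is odd. -/
theorem stmt6 (a b : ℤ) (e f : ℚ)
    (hint : ∀ i j : Fin 4, ∃ n : ℤ,
      NormedSpace.exp (Nmat ((a : ℤ) : ℚ) ((b : ℤ) : ℚ) e f) i j = (n : ℚ))
    (A : Matrix (Fin 4) (Fin 4) ℤ)
    (hlow : ∀ i j : Fin 4, i < j → A i j = 0)
    (hdiag : ∀ i : Fin 4, A i i = 1)
    (hsymp : Aᵀ * Jmat ℤ * A = Jmat ℤ)
    (a' b' e' f' : ℚ)
    (hconj : A.map ((↑) : ℤ → ℚ) * Nmat ((a : ℤ) : ℚ) ((b : ℤ) : ℚ) e f *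
        (A.map ((↑) : ℤ → ℚ))⁻¹ = Nmat a' b' e' f') :
    a' = (a : ℚ) ∧ b' = (b : ℚ) ∧
    (Even (a * b) →
      ∃ E E' : ℤ, e = (E : ℚ) ∧ e' = (E' : ℚ) ∧ (Int.gcd a b : ℤ) ∣ E' - E) ∧
    (Odd (a * b) →
      ∃ E E' : ℤ, 2 * e = (E : ℚ) ∧ 2 * e' = (E' : ℚ) ∧ Odd E ∧ Odd E' ∧
        (2 * (Int.gcd a b : ℤ)) ∣ E' - E) := by
  set Aq : Matrix (Fin 4) (Fin 4) ℚ := A.map ((↑) : ℤ → ℚ) with hAq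
  -- determinant of Aq is 1
  have hdet : Aq.det = 1 := by
    rw [Matrix.det_of_lowerTriangular Aq (by
      intro i j hij
      simp only [hAq, Matrix.map_apply]
      rw [hlow i j (by exact hij), Int.cast_zero])]
    simp [hAq, Matrix.map_apply, hdiag]
  have hU : IsUnit Aq.det := by rw [hdet]; exact isUnit_one
  have hAN : Nmat a' b' e' f' * Aq = Aq * Nmat ((a:ℤ):ℚ) ((b:ℤ):ℚ) e f := by
    rw [← hconj, Matrix.mul_assoc, Matrix.nonsing_inv_mul Aq hU, Matrix.mul_one]
  -- entry helpers
  have h01 : A 0 1 = 0 := hlow 0 1 (by decide)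
  have h02 : A 0 2 = 0 := hlow 0 2 (by decide)
  have h03 : A 0 3 = 0 := hlow 0 3 (by decide)
  have h12 : A 1 2 = 0 := hlow 1 2 (by decide)
  have h13 : A 1 3 = 0 := hlow 1 3 (by decide)
  have h23 : A 2 3 = 0 := hlow 2 3 (by decide)
  have d0 : A 0 0 = 1 := hdiag 0
  have d1 : A 1 1 = 1 := hdiag 1
  have d2 : A 2 2 = 1 := hdiag 2
  have h13' : A 1 (Fin.succ 2) = 0 := h13
  have h23' : A 2 (Fin.succ 2) = 0 := h23
  have ha' : a' = (a : ℚ) := by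
    have := congrFun (congrFun hAN 1) 0
    simp [hAq, Nmat, Matrix.mul_apply, Fin.sum_univ_succ, Matrix.map_apply,
      h01, h02, h03, h12, h13, h23, h13', h23', d0, d1, d2] at this
    linarith
  have hb' : b' = (b : ℚ) := by
    have := congrFun (congrFun hAN 2) 1
    simp [hAq, Nmat, Matrix.mul_apply, Fin.sum_univ_succ, Matrix.map_apply,
      h01, h02, h03, h12, h13, h23, h13', h23', d0, d1, d2] at this
    linarith
  have he' : e' = e + (A 2 1 : ℚ) * a - (A 1 0 : ℚ) * b := by
    have := congrFun (congrFun hAN 2) 0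
    simp [hAq, Nmat, Matrix.mul_apply, Fin.sum_univ_succ, Matrix.map_apply,
      h01, h02, h03, h12, h13, h23, h13', h23', d0, d1, d2, ha', hb'] at this
    linarith
  obtain ⟨n, hn⟩ := hint 2 0
  rw [exp20] at hn
  have hgd : (Int.gcd a b : ℤ) ∣ A 2 1 * a - A 1 0 * b :=
    dvd_sub (Dvd.dvd.mul_left (Int.gcd_dvd_left a b) _) (Dvd.dvd.mul_left (Int.gcd_dvd_right a b) _)
  refine ⟨ha', hb', ?_, ?_⟩
  · rintro ⟨k, hk⟩
    have h2k : a * b = 2 * k := by omega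
    have hq : (a : ℚ) * b = 2 * (k : ℚ) := by exact_mod_cast congrArg (Int.cast : ℤ → ℚ) h2k
    rw [hq] at hn
    refine ⟨n - k, n - k + (A 2 1 * a - A 1 0 * b), ?_, ?_, ?_⟩
    · push_cast; linarith
    · rw [he']; push_cast; linarith
    · have : (n - k + (A 2 1 * a - A 1 0 * b)) - (n - k) = A 2 1 * a - A 1 0 * b := by ring
      rw [this]; exact hgd
  · rintro ⟨k, hk⟩
    refine ⟨2*n - a*b, 2*n - a*b + 2*(A 2 1 * a - A 1 0 * b), ?_, ?_, ?_, ?_, ?_⟩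
    · push_cast; linarith
    · rw [he']; push_cast; linarith
    · exact ⟨n - k - 1, by omega⟩
    · exact ⟨n - k - 1 + (A 2 1 * a - A 1 0 * b), by omega⟩
    · have : (2*n - a*b + 2*(A 2 1 * a - A 1 0 * b)) - (2*n - a*b)
          = 2 * (A 2 1 * a - A 1 0 * b) := by ring
      rw [this]; exact mul_dvd_mul_left 2 hgd
end

section
/- Let a, b, e, f be rational numbers with a ≠ 0, N = N(a,b,e,f), and let A be a lower unitriangular 4×4 rational matrix with AᵀJA = J; write A·N·A⁻¹ = N(a, b, e', f') (with e', f' rational). Let π ∈ ℂ and v = (1, 0, f/(2a), π)ᵀ. Then, setting c = −A₂₁/a ∈ ℚ, the vector w = exp(c·A N A⁻¹)·A·v has the form w = (1, 0, f'/(2a), π + λ)ᵀ for some rational number λ. (Thus the extension-class parameter π of the normalized limit Hodge filtration changes only by a rational number under integral renormalization.) -/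
open Matrix

lemma Nmat_pow2 (a b e f : ℂ) :
    Nmat a b e f ^ 2 = !![0,0,0,0; 0,0,0,0; a*b,0,0,0; 0,-(a*b),0,0] := by
  rw [pow_two]
  ext i j
  fin_cases i <;> fin_cases j <;>
    simp [Nmat, Matrix.mul_apply, Matrix.vecHead, Matrix.vecTail, Fin.sum_univ_four] <;> ring

lemma Nmat_pow3 (a b e f : ℂ) :
    Nmat a b e f ^ 3 = !![0,0,0,0; 0,0,0,0; 0,0,0,0; -(a^2*b),0,0,0] := by
  rw [pow_succ, Nmat_pow2]
  ext i j
  fin_cases i <;> fin_cases j <;>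
    simp [Nmat, Matrix.mul_apply, Matrix.vecHead, Matrix.vecTail, Fin.sum_univ_four] <;> ring

lemma Nmat_pow4 (a b e f : ℂ) : Nmat a b e f ^ 4 = 0 := by
  rw [pow_succ, Nmat_pow3]
  ext i j
  fin_cases i <;> fin_cases j <;>
    simp [Nmat, Matrix.mul_apply, Matrix.vecHead, Matrix.vecTail, Fin.sum_univ_four]

lemma exp_smul_Nmat (c a b e f : ℂ) :
    NormedSpace.exp (c • Nmat a b e f) =
      1 + c • Nmat a b e f + (2⁻¹:ℂ) • (c • Nmat a b e f) ^ 2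
        + (6⁻¹:ℂ) • (c • Nmat a b e f) ^ 3 := by
  have hM4 : (c • Nmat a b e f) ^ 4 = 0 := by
    rw [smul_pow, Nmat_pow4, smul_zero]
  simp only [NormedSpace.exp_eq_tsum (𝕂 := ℂ)]
  rw [tsum_eq_sum (s := Finset.range 4) ?_]
  · simp [Finset.sum_range_succ, Nat.factorial]
  · intro n hn
    have h4 : (c • Nmat a b e f) ^ n = 0 := by
      obtain ⟨m, rfl⟩ := Nat.exists_eq_add_of_le
        (by simpa [Finset.mem_range, not_lt] using hn)
      rw [pow_add, hM4, zero_mul]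
    rw [h4, smul_zero]

lemma map_Nmat (a b e f : ℚ) :
    (Nmat a b e f).map ((↑) : ℚ → ℂ) = Nmat (a:ℂ) (b:ℂ) (e:ℂ) (f:ℂ) := by
  ext i j
  fin_cases i <;> fin_cases j <;> simp [Nmat, Matrix.vecHead, Matrix.vecTail]

set_option maxHeartbeats 1600000 in
/-- under integral renormalization by a lower unitriangular
symplectic `A` (with `A·N·A⁻¹ = N(a,b,e',f')`), the normalized limit Hodge
filtration vector `v = (1, 0, f/(2a), π)ᵀ` is transformed, after retwisting by
`exp(c·ANA⁻¹)` with `c = −A₂₁/a`, into `(1, 0, f'/(2a), π + λ)ᵀ` for some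
rational `λ`. -/
theorem stmt10 (a b e f e' f' : ℚ) (ha : a ≠ 0)
    (A : Matrix (Fin 4) (Fin 4) ℚ)
    (hlow : ∀ i j : Fin 4, i < j → A i j = 0)
    (hdiag : ∀ i : Fin 4, A i i = 1)
    (hsymp : Aᵀ * Jmat ℚ * A = Jmat ℚ)
    (hconj : A * Nmat a b e f * A⁻¹ = Nmat a b e' f')
    (π : ℂ) :
    let c : ℚ := -(A 1 0) / a
    let v : Fin 4 → ℂ := ![1, 0, ((f / (2 * a) : ℚ) : ℂ), π]
    let w : Fin 4 → ℂ :=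
      (NormedSpace.exp ((c : ℂ) •
        ((A * Nmat a b e f * A⁻¹).map ((↑) : ℚ → ℂ)))).mulVec
        ((A.map ((↑) : ℚ → ℂ)).mulVec v)
    ∃ lam : ℚ, w = ![1, 0, ((f' / (2 * a) : ℚ) : ℂ), π + (lam : ℂ)] := by
  intro c v w
  have h01 : A 0 1 = 0 := hlow 0 1 (by decide)
  have h02 : A 0 2 = 0 := hlow 0 2 (by decide)
  have h03 : A 0 3 = 0 := hlow 0 3 (by decide)
  have h12 : A 1 2 = 0 := hlow 1 2 (by decide)
  have h13 : A 1 3 = 0 := hlow 1 3 (by decide)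
  have h23 : A 2 3 = 0 := hlow 2 3 (by decide)
  have hd0 : A 0 0 = 1 := hdiag 0
  have hd1 : A 1 1 = 1 := hdiag 1
  have hd2 : A 2 2 = 1 := hdiag 2
  have hd3 : A 3 3 = 1 := hdiag 3
  have hA : A = !![1,0,0,0; A 1 0,1,0,0; A 2 0, A 2 1,1,0; A 3 0, A 3 1, A 3 2,1] := by
    ext i j
    fin_cases i <;> fin_cases j <;>
      simp_all
  have hdet : IsUnit A.det := by
    have : A.det = 1 := by
      rw [hA]
      simp [Matrix.det_succ_row_zero, Fin.sum_univ_succ]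
    rw [this]; exact isUnit_one
  have hAN : A * Nmat a b e f = Nmat a b e' f' * A := by
    have h1 : A * Nmat a b e f * A⁻¹ * A = Nmat a b e' f' * A := by rw [hconj]
    rwa [Matrix.mul_assoc (A * Nmat a b e f), Matrix.nonsing_inv_mul A hdet,
      Matrix.mul_one] at h1
  rw [hA] at hAN hsymp
  have C2 : e' = e + A 2 1 * a - b * A 1 0 := by
    have h := congrFun (congrFun hAN 2) 0
    simp [Nmat, Matrix.mul_apply, Fin.sum_univ_four] at h
    linear_combination -h
  have C3 : A 3 1 * a + A 3 2 * e + f = f' + e' * A 1 0 - a * A 2 0 := by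
    have h := congrFun (congrFun hAN 3) 0
    simp [Nmat, Matrix.mul_apply, Fin.sum_univ_four] at h
    linear_combination h
  have S1 : A 3 2 = -A 1 0 := by
    have h := congrFun (congrFun hsymp 0) 2
    simp only [Matrix.mul_apply, Matrix.transpose_apply, Fin.sum_univ_four] at h
    simp [Jmat, Matrix.vecHead, Matrix.vecTail] at h
    linear_combination h
  have S2 : A 2 0 = A 3 1 + A 1 0 * A 2 1 := by
    have h := congrFun (congrFun hsymp 0) 1
    simp only [Matrix.mul_apply, Matrix.transpose_apply, Fin.sum_univ_four] at h
    simp [Jmat, Matrix.vecHead, Matrix.vecTail] at h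
    linear_combination -h
  have hf' : f' = f + 2 * A 3 1 * a - 2 * A 1 0 * e + b * (A 1 0)^2 := by
    linear_combination -C3 - A 1 0 * C2 + e * S1 + a * S2
  subst hf'
  subst C2
  have hA2 : A = !![1,0,0,0; A 1 0,1,0,0;
      A 3 1 + A 1 0 * A 2 1, A 2 1,1,0; A 3 0, A 3 1, -(A 1 0),1] := by
    rw [← S2, ← S1]; exact hA
  have hAc : A.map ((↑) : ℚ → ℂ) = !![1,0,0,0; ((A 1 0 : ℚ):ℂ),1,0,0;
      ((A 3 1 : ℚ):ℂ) + ((A 1 0 : ℚ):ℂ) * ((A 2 1 : ℚ):ℂ), ((A 2 1 : ℚ):ℂ),1,0;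
      ((A 3 0 : ℚ):ℂ), ((A 3 1 : ℚ):ℂ), -((A 1 0 : ℚ):ℂ),1] := by
    rw [hA2]
    ext i j
    fin_cases i <;> fin_cases j <;> simp [Matrix.vecHead, Matrix.vecTail] <;> push_cast <;> ring
  refine ⟨A 3 0 - A 1 0 * f / a - A 1 0 * A 3 1 + (A 1 0)^2 * e / a
      - b * (A 1 0)^3 / (3*a), ?_⟩
  show (NormedSpace.exp (((-(A 1 0) / a : ℚ) : ℂ) •
      ((A * Nmat a b e f * A⁻¹).map ((↑) : ℚ → ℂ)))).mulVec
      ((A.map ((↑) : ℚ → ℂ)).mulVec ![1, 0, ((f / (2 * a) : ℚ) : ℂ), π]) = _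
  rw [hconj, map_Nmat, exp_smul_Nmat, smul_pow, smul_pow, Nmat_pow2, Nmat_pow3, hAc]
  have haC : (a:ℂ) ≠ 0 := by exact_mod_cast ha
  have hu : (a:ℂ) * ((a:ℚ):ℂ)⁻¹ = 1 := mul_inv_cancel₀ haC
  funext i
  fin_cases i
  · simp [Nmat, Matrix.add_mulVec, Matrix.one_mulVec, Matrix.smul_mulVec,
      Matrix.mulVec, dotProduct, Matrix.vecHead, Matrix.vecTail,
      Fin.sum_univ_four]
  · simp [Nmat, Matrix.add_mulVec, Matrix.one_mulVec, Matrix.smul_mulVec,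
      Matrix.mulVec, dotProduct, Matrix.vecHead, Matrix.vecTail,
      Fin.sum_univ_four]
    push_cast
    field_simp
    ring
  · simp [Nmat, Matrix.add_mulVec, Matrix.one_mulVec, Matrix.smul_mulVec,
      Matrix.mulVec, dotProduct, Matrix.vecHead, Matrix.vecTail,
      Fin.sum_univ_four]
    push_cast
    field_simp
    ring
  · simp [Nmat, Matrix.add_mulVec, Matrix.one_mulVec, Matrix.smul_mulVec,
      Matrix.mulVec, dotProduct, Matrix.vecHead, Matrix.vecTail,
      Fin.sum_univ_four]
    push_cast
    field_simp
    ring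
end

section
/- For i = 1, 2, let aᵢ, bᵢ, eᵢ, fᵢ be rational numbers with aᵢ ≠ 0 and bᵢ > 0 such that exp(Nᵢ) has integer entries, where Nᵢ = N(aᵢ,bᵢ,eᵢ,fᵢ); let πᵢ ∈ ℂ and vᵢ = (1, 0, fᵢ/(2aᵢ), πᵢ)ᵀ. Assume b₁ ≠ b₂ or π₁ − π₂ ∉ ℚ. Then there exist no integer 4×4 matrix g with gᵀJg = J, complex number c, and nonzero complex number μ such that g·N₁ = N₂·g and g·v₁ = μ·exp(c·N₂)·v₂. (This is the matrix form of the statement that the nilpotent orbits at two maximally unipotent monodromy points with distinct invariants b, or with π₁ − π₂ irrational, are not identified by any element of G_ℤ = Sp(2,ℤ).) -/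
open Matrix

lemma exp_nilp4_s11 {𝔸 : Type*} [Ring 𝔸] [Algebra ℂ 𝔸] [TopologicalSpace 𝔸] [IsTopologicalRing 𝔸]
    [T2Space 𝔸] (M : 𝔸) (h : M ^ 4 = 0) :
    NormedSpace.exp M = 1 + M + (2⁻¹ : ℂ) • M ^ 2 + (6⁻¹ : ℂ) • M ^ 3 := by
  rw [NormedSpace.exp_eq_tsum ℂ]
  show ∑' (n : ℕ), ((n.factorial : ℂ))⁻¹ • M ^ n = _
  rw [tsum_eq_sum (s := Finset.range 4) (fun n hn => ?_)]
  · norm_num [Finset.sum_range_succ, Nat.factorial]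
  · have h4 : (4:ℕ) ≤ n := le_of_not_gt (fun hlt => hn (Finset.mem_range.2 hlt))
    simp [pow_eq_zero_of_le h4 h]

/-- for two normalized MUM data `(Nᵢ, vᵢ)` with `aᵢ ≠ 0`,
`bᵢ > 0`, `exp(Nᵢ)` integral, and `b₁ ≠ b₂` or `π₁ − π₂ ∉ ℚ`, no integral
symplectic `g` satisfies `g·N₁ = N₂·g` and `g·v₁ = μ·exp(c·N₂)·v₂`. -/
theorem stmt11 (a₁ b₁ e₁ f₁ a₂ b₂ e₂ f₂ : ℚ) (π₁ π₂ : ℂ)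
    (ha₁ : a₁ ≠ 0) (ha₂ : a₂ ≠ 0) (hb₁ : 0 < b₁) (hb₂ : 0 < b₂)
    (hint₁ : ∀ i j : Fin 4, ∃ n : ℤ,
      NormedSpace.exp (Nmat a₁ b₁ e₁ f₁) i j = (n : ℚ))
    (hint₂ : ∀ i j : Fin 4, ∃ n : ℤ,
      NormedSpace.exp (Nmat a₂ b₂ e₂ f₂) i j = (n : ℚ))
    (hne : b₁ ≠ b₂ ∨ ∀ q : ℚ, π₁ - π₂ ≠ (q : ℂ)) :
    ¬ ∃ (g : Matrix (Fin 4) (Fin 4) ℤ) (c μ : ℂ),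
        μ ≠ 0 ∧
        gᵀ * Jmat ℤ * g = Jmat ℤ ∧
        g.map ((↑) : ℤ → ℚ) * Nmat a₁ b₁ e₁ f₁
          = Nmat a₂ b₂ e₂ f₂ * g.map ((↑) : ℤ → ℚ) ∧
        (g.map ((↑) : ℤ → ℂ)).mulVec ![1, 0, ((f₁ / (2 * a₁) : ℚ) : ℂ), π₁]
          = μ • (NormedSpace.exp
              (c • (Nmat a₂ b₂ e₂ f₂).map ((↑) : ℚ → ℂ))).mulVec
              ![1, 0, ((f₂ / (2 * a₂) : ℚ) : ℂ), π₂] := by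
  rintro ⟨g, c, μ, hμ, hsymp, hcomm, hvec⟩
  -- entry equations from the commutation relation
  have h00 := congr_fun (congr_fun hcomm 0) 0
  have h01 := congr_fun (congr_fun hcomm 0) 1
  have h02 := congr_fun (congr_fun hcomm 0) 2
  have h11 := congr_fun (congr_fun hcomm 1) 1
  have h12 := congr_fun (congr_fun hcomm 1) 2
  have h33 := congr_fun (congr_fun hcomm 3) 3
  have h21 := congr_fun (congr_fun hcomm 2) 1
  simp [Nmat, Matrix.mul_apply, Fin.sum_univ_four, Matrix.map_apply] at h00 h01 h02 h11 h12 h33 h21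
  have g03 : g 0 3 = 0 := h02.resolve_right ha₁
  have g02 : g 0 2 = 0 := by
    rw [g03] at h01
    have h : (g 0 2 : ℚ) * b₁ = 0 := by push_cast at h01; linarith
    rcases mul_eq_zero.1 h with h | h
    · exact_mod_cast h
    · exact absurd h hb₁.ne'
  have g01 : g 0 1 = 0 := by
    rw [g03, g02] at h00
    have h : (g 0 1 : ℚ) * a₁ = 0 := by push_cast at h00; linarith
    rcases mul_eq_zero.1 h with h | h
    · exact_mod_cast h
    · exact absurd h ha₁
  have g13 : g 1 3 = 0 := by
    rw [g02] at h12
    have h : (g 1 3 : ℚ) * a₁ = 0 := by push_cast at h12; linarith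
    rcases mul_eq_zero.1 h with h | h
    · exact_mod_cast h
    · exact absurd h ha₁
  have g12 : g 1 2 = 0 := by
    rw [g13, g01] at h11
    have h : (g 1 2 : ℚ) * b₁ = 0 := by push_cast at h11; linarith
    rcases mul_eq_zero.1 h with h | h
    · exact_mod_cast h
    · exact absurd h hb₁.ne'
  have g23 : g 2 3 = 0 := by
    rw [g03, g13] at h33
    have h : (g 2 3 : ℚ) * a₂ = 0 := by push_cast at h33; linarith
    rcases mul_eq_zero.1 h with h | h
    · exact_mod_cast h
    · exact absurd h ha₂
  -- symplectic diagonal units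
  have hs03 := congr_fun (congr_fun hsymp 0) 3
  have hs12 := congr_fun (congr_fun hsymp 1) 2
  simp [Jmat, Matrix.mul_apply, Matrix.transpose_apply, Fin.sum_univ_four,
    g01, g02, g03, g12, g13, g23] at hs03 hs12
  have hbeq : b₁ = b₂ := by
    rcases Int.mul_eq_one_iff_eq_one_or_neg_one.1 hs12 with ⟨e11, e22⟩ | ⟨e11, e22⟩ <;>
      rw [g23, g01, e11, e22] at h21 <;> push_cast at h21 <;> linarith
  rcases hne with h | hπ
  · exact h hbeq
  have e33 : g 3 3 = g 0 0 := by
    rcases Int.mul_eq_one_iff_eq_one_or_neg_one.1 hs03 with ⟨e00, e33⟩ | ⟨e00, e33⟩ <;>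
      rw [e00, e33]
  have hu : (g 0 0 : ℂ) * (g 0 0 : ℂ) = 1 := by
    rw [e33] at hs03; exact_mod_cast hs03
  have hN4 : ((Nmat a₂ b₂ e₂ f₂).map ((↑) : ℚ → ℂ)) ^ 4 = 0 := by
    ext i j
    fin_cases i <;> fin_cases j <;>
      simp [Nmat, pow_succ, Matrix.mul_apply, Fin.sum_univ_four, Matrix.map_apply]
  have hM4 : (c • (Nmat a₂ b₂ e₂ f₂).map ((↑) : ℚ → ℂ)) ^ 4 = 0 := by
    rw [smul_pow, hN4, smul_zero]
  rw [exp_nilp4_s11 _ hM4] at hvec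
  have hv0 := congr_fun hvec 0
  have hv1 := congr_fun hvec 1
  have hv3 := congr_fun hvec 3
  simp [Matrix.mulVec, dotProduct, Fin.sum_univ_four, Nmat, Matrix.map_apply,
    Matrix.smul_apply, Matrix.add_apply, Matrix.one_apply, smul_pow, pow_succ,
    Matrix.mul_apply, g01, g02, g03, g12, g13, e33, smul_eq_mul] at hv0 hv1 hv3
  have ha₁c : (a₁ : ℂ) ≠ 0 := by exact_mod_cast ha₁
  have ha₂c : (a₂ : ℂ) ≠ 0 := by exact_mod_cast ha₂
  have hinv : (2 * (a₂ : ℂ))⁻¹ * (2 * (a₂ : ℂ)) = 1 :=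
    inv_mul_cancel₀ (by simpa using ha₂c)
  rw [← hv0] at hv1 hv3
  rcases Int.mul_eq_one_iff_eq_one_or_neg_one.1 hs03 with ⟨e00, _⟩ | ⟨e00, _⟩ <;>
    rw [e00] at hv1 hv3 <;> push_cast at hv1 hv3
  case inr.inl =>
    have hc : c = (g 1 0 : ℂ) / (a₂ : ℂ) := by
      rw [eq_div_iff ha₂c]
      linear_combination -hv1
    have hv3' : (g 3 0 : ℂ) + (g 3 2 : ℂ) * (f₁ : ℂ) / (2 * (a₁ : ℂ)) + π₁
        = ((g 1 0 : ℂ) / (a₂ : ℂ)) * (f₂ : ℂ) / 2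
          - ((g 1 0 : ℂ) / (a₂ : ℂ)) ^ 3 * (a₂ : ℂ) ^ 2 * (b₂ : ℂ) / 6 + π₂ := by
      rw [hc] at hv3
      linear_combination hv3 - (((g 1 0 : ℂ) / (a₂ : ℂ)) * (f₂ : ℂ) / 2) * hinv
    refine hπ ((g 1 0 : ℚ)/a₂ * f₂/2 - ((g 1 0 : ℚ)/a₂)^3*a₂^2*b₂/6
      - (g 3 0 : ℚ) - (g 3 2 : ℚ)*f₁/(2*a₁)) ?_
    push_cast
    linear_combination hv3'
  case inr.inr =>
    have hc : c = -((g 1 0 : ℂ) / (a₂ : ℂ)) := by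
      rw [neg_div', eq_div_iff ha₂c]
      linear_combination hv1
    have hv3' : (g 3 0 : ℂ) + (g 3 2 : ℂ) * (f₁ : ℂ) / (2 * (a₁ : ℂ)) - π₁
        = ((g 1 0 : ℂ) / (a₂ : ℂ)) * (f₂ : ℂ) / 2
          - ((g 1 0 : ℂ) / (a₂ : ℂ)) ^ 3 * (a₂ : ℂ) ^ 2 * (b₂ : ℂ) / 6 - π₂ := by
      rw [hc] at hv3
      linear_combination hv3 - (((g 1 0 : ℂ) / (a₂ : ℂ)) * (f₂ : ℂ) / 2) * hinv
    refine hπ (-((g 1 0 : ℚ)/a₂ * f₂/2) + ((g 1 0 : ℚ)/a₂)^3*a₂^2*b₂/6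
      + (g 3 0 : ℚ) + (g 3 2 : ℚ)*f₁/(2*a₁)) ?_
    push_cast
    linear_combination -hv3'
end
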